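/- arXiv:1604.07128 — 7 statements merged into one kernel-verified Lean document; each statement's English description precedes it below -/
import Mathlib

section
/- If G is the join of two graphs G1 and G2, then the Grundy number of G equals the sum of the Grundy numbers of G1 and G2. -/
open SimpleGraph

/-- A first-fit (greedy/Grundy) coloring: a proper coloring by naturals such that every
vertex with color `j` has a neighbor of each color `i < j`. -/
def IsGrundyColoring {V : Type*} (G : SimpleGraph V) (f : V → ℕ) : Prop :=
  (∀ u v : V, G.Adj u v → f u ≠ f v) ∧
  ∀ v : V, ∀ i < f v, ∃ u : V, G.Adj v u ∧ f u = i

/-- The Grundy number: the maximum number of colors used by a first-fit coloring. -/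
noncomputable def grundy {V : Type*} [Fintype V] (G : SimpleGraph V) : ℕ :=
  sSup {k | ∃ f : V → ℕ, IsGrundyColoring G f ∧ k = (Finset.univ.image f).card}

/-- The join of two graphs: their disjoint union plus all edges between the parts. -/
def SimpleGraph.join {α β : Type*} (G : SimpleGraph α) (H : SimpleGraph β) :
    SimpleGraph (α ⊕ β) where
  Adj u v := match u, v with
    | Sum.inl u, Sum.inl v => G.Adj u v
    | Sum.inr u, Sum.inr v => H.Adj u v
    | _, _ => True
  symm := ⟨fun u v => match u, v with
    | Sum.inl u, Sum.inl v => G.adj_symm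
    | Sum.inr u, Sum.inr v => H.adj_symm
    | Sum.inl _, Sum.inr _ | Sum.inr _, Sum.inl _ => fun _ => trivial⟩
  loopless := ⟨fun u => by cases u <;> simp⟩

/-- `H` occurs as an induced subgraph of `G`. -/
def HasInduced {V W : Type*} (G : SimpleGraph V) (H : SimpleGraph W) : Prop :=
  ∃ f : W ↪ V, ∀ a b : W, G.Adj (f a) (f b) ↔ H.Adj a b

/-- A cograph is a graph without induced `P₄`. -/
def IsCograph {V : Type*} (G : SimpleGraph V) : Prop :=
  ¬ HasInduced G (pathGraph 4)

/-- Seidel switching with respect to a vertex set `S`: adjacencies between `S` and its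
complement are complemented, other adjacencies are unchanged. -/
def seidelSwitch {V : Type*} (G : SimpleGraph V) (S : Set V) : SimpleGraph V where
  Adj x y := x ≠ y ∧ (G.Adj x y ↔ ((x ∈ S) ↔ (y ∈ S)))
  symm := ⟨by
    rintro x y ⟨h1, h2⟩
    refine ⟨h1.symm, ?_⟩
    rw [G.adj_comm] at h2
    tauto⟩
  loopless := ⟨fun x h => h.1 rfl⟩

/-- A Cameron graph: obtained from some cograph by some Seidel switch. -/
def IsCameron {V : Type*} (G : SimpleGraph V) : Prop :=
  ∃ (S : Set V) (H : SimpleGraph V), IsCograph H ∧ G = seidelSwitch H S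

open scoped Classical in
/-- The number of edges of `G` among the three pairs from `{x, y, z}`. -/
noncomputable def edgeCount {V : Type*} (G : SimpleGraph V) (x y z : V) : ℕ :=
  (if G.Adj x y then 1 else 0) + (if G.Adj x z then 1 else 0) + (if G.Adj y z then 1 else 0)

/-- A triple of (distinct) vertices is odd if it spans an odd number of edges. -/
def OddTriple {V : Type*} (G : SimpleGraph V) (x y z : V) : Prop :=
  Odd (edgeCount G x y z)

/-- `C` is an independent set of `G`. -/
def IsIndepOn {V : Type*} (G : SimpleGraph V) (C : Set V) : Prop :=
  ∀ u ∈ C, ∀ v ∈ C, ¬ G.Adj u v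

/-- `C` is a maximal independent set of the subgraph of `G` induced by `W`. -/
def IsMaxIndepOn {V : Type*} (G : SimpleGraph V) (W C : Set V) : Prop :=
  C ⊆ W ∧ IsIndepOn G C ∧ ∀ D, C ⊆ D → D ⊆ W → IsIndepOn G D → D = C

/-- `C` is a maximal clique of the subgraph of `G` induced by `W`. -/
def IsMaxCliqueOn {V : Type*} (G : SimpleGraph V) (W C : Set V) : Prop :=
  C ⊆ W ∧ G.IsClique C ∧ ∀ D, C ⊆ D → D ⊆ W → G.IsClique D → D = C

/-- `x` and `y` are twins within `W`: every other vertex of `W` is adjacent to both or neither. -/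
def TwinsOn {V : Type*} (G : SimpleGraph V) (W : Set V) (x y : V) : Prop :=
  ∀ z ∈ W, z ≠ x → z ≠ y → (G.Adj x z ↔ G.Adj y z)

/-- `x` and `y` are anti-twins within `W`: every other vertex of `W` is adjacent to
exactly one of them. -/
def AntiTwinsOn {V : Type*} (G : SimpleGraph V) (W : Set V) (x y : V) : Prop :=
  ∀ z ∈ W, z ≠ x → z ≠ y → (G.Adj x z ↔ ¬ G.Adj y z)

/-- The bull graph. -/
def bull : SimpleGraph (Fin 5) :=
  SimpleGraph.fromRel fun i j => (i.val, j.val) ∈ [(0,1),(0,2),(1,2),(0,3),(1,4)]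

/-- The gem graph: `P₄` plus a dominating vertex. -/
def gem : SimpleGraph (Fin 5) :=
  SimpleGraph.fromRel fun i j => (i.val, j.val) ∈ [(0,1),(1,2),(2,3),(4,0),(4,1),(4,2),(4,3)]


-- downward closed finset of ℕ is a range
lemma dc_eq_range (I : Finset ℕ) (h : ∀ c ∈ I, ∀ i < c, i ∈ I) :
    I = Finset.range I.card := by
  have hsub : I ⊆ Finset.range I.card := by
    intro c hc
    have h1 : Finset.range (c + 1) ⊆ I := by
      intro i hi
      rw [Finset.mem_range, Nat.lt_succ_iff] at hi
      rcases lt_or_eq_of_le hi with h' | h'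
      · exact h c hc i h'
      · exact h' ▸ hc
    have := Finset.card_le_card h1
    rw [Finset.card_range] at this
    exact Finset.mem_range.2 this
  exact Finset.eq_of_subset_of_card_le hsub (by simp)

noncomputable def greedy {n : ℕ} (G : SimpleGraph (Fin n)) : Fin n → ℕ
  | v => sInf {i | ∀ u, u < v → G.Adj u v → greedy G u ≠ i}
termination_by v => v.val

lemma greedy_def {n : ℕ} (G : SimpleGraph (Fin n)) (v : Fin n) :
    greedy G v = sInf {i | ∀ u, u < v → G.Adj u v → greedy G u ≠ i} := by
  rw [greedy]

lemma greedy_set_nonempty {n : ℕ} (G : SimpleGraph (Fin n)) (v : Fin n) :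
    {i | ∀ u, u < v → G.Adj u v → greedy G u ≠ i}.Nonempty := by
  obtain ⟨i, hi⟩ := Infinite.exists_notMem_finset (Finset.univ.image (greedy G))
  exact ⟨i, fun u _ _ h => hi (h ▸ Finset.mem_image_of_mem _ (Finset.mem_univ u))⟩

lemma greedy_isGrundy {n : ℕ} (G : SimpleGraph (Fin n)) : IsGrundyColoring G (greedy G) := by
  constructor
  · intro u v huv
    rcases lt_trichotomy u v with h | h | h
    · have hm := Nat.sInf_mem (greedy_set_nonempty G v)
      rw [← greedy_def] at hm
      exact fun he => hm u h huv he
    · exact absurd huv (by simp [h])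
    · have hm := Nat.sInf_mem (greedy_set_nonempty G u)
      rw [← greedy_def] at hm
      exact (hm v h huv.symm).symm
  · intro v i hi
    rw [greedy_def] at hi
    have hni := Nat.notMem_of_lt_sInf hi
    simp only [Set.mem_setOf_eq, not_forall] at hni
    obtain ⟨u, _, hadj, he⟩ := hni
    rw [not_not] at he
    exact ⟨u, hadj.symm, he⟩

lemma exists_isGrundyColoring {V : Type*} [Fintype V] (G : SimpleGraph V) :
    ∃ f : V → ℕ, IsGrundyColoring G f := by
  classical
  let e := Fintype.equivFin V
  let G' : SimpleGraph (Fin (Fintype.card V)) := G.comap e.symm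
  refine ⟨fun v => greedy G' (e v), ?_, ?_⟩
  · intro u v huv
    have h : G'.Adj (e u) (e v) := by simpa [G', SimpleGraph.comap] using huv
    exact (greedy_isGrundy G').1 _ _ h
  · intro v i hiv
    obtain ⟨u, hadj, hu⟩ := (greedy_isGrundy G').2 (e v) i hiv
    refine ⟨e.symm u, ?_, by simpa using hu⟩
    have h : G.Adj (e.symm (e v)) (e.symm u) := hadj
    simpa using h

lemma grundy_image_eq {V : Type*} [Fintype V] (G : SimpleGraph V) (f : V → ℕ)
    (h : IsGrundyColoring G f) :
    Finset.univ.image f = Finset.range (Finset.univ.image f).card := by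
  apply dc_eq_range
  intro c hc i hic
  simp only [Finset.mem_image, Finset.mem_univ, true_and] at hc ⊢
  obtain ⟨v, hv⟩ := hc
  obtain ⟨u, _, hu⟩ := h.2 v i (hv ▸ hic)
  exact ⟨u, hu⟩

lemma grundySet_bddAbove {V : Type*} [Fintype V] (G : SimpleGraph V) :
    BddAbove {k | ∃ f : V → ℕ, IsGrundyColoring G f ∧ k = (Finset.univ.image f).card} := by
  refine ⟨Fintype.card V, ?_⟩
  rintro k ⟨f, _, rfl⟩
  exact Finset.card_image_le.trans (by simp)

lemma grundySet_nonempty {V : Type*} [Fintype V] (G : SimpleGraph V) :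
    {k | ∃ f : V → ℕ, IsGrundyColoring G f ∧ k = (Finset.univ.image f).card}.Nonempty := by
  obtain ⟨f, hf⟩ := exists_isGrundyColoring G
  exact ⟨_, f, hf, rfl⟩

lemma grundy_mem {V : Type*} [Fintype V] (G : SimpleGraph V) :
    grundy G ∈ {k | ∃ f : V → ℕ, IsGrundyColoring G f ∧ k = (Finset.univ.image f).card} :=
  Nat.sSup_mem (grundySet_nonempty G) (grundySet_bddAbove G)

lemma le_grundy {V : Type*} [Fintype V] (G : SimpleGraph V) (f : V → ℕ)
    (hf : IsGrundyColoring G f) : (Finset.univ.image f).card ≤ grundy G :=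
  le_csSup (grundySet_bddAbove G) ⟨f, hf, rfl⟩

/-- Restriction lemma. -/
lemma restrict_card_le {α V : Type*} [Fintype α] [Fintype V]
    (G1 : SimpleGraph α) (G : SimpleGraph V) (f : V → ℕ) (hf : IsGrundyColoring G f)
    (ι : α → V) (hadj : ∀ a a', G.Adj (ι a) (ι a') ↔ G1.Adj a a')
    (hclass : ∀ v, f v ∈ Finset.univ.image (fun a => f (ι a)) → ∃ a, ι a = v) :
    (Finset.univ.image (fun a => f (ι a))).card ≤ grundy G1 := by
  classical
  set A : Finset ℕ := Finset.univ.image (fun a => f (ι a)) with hA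
  set k := A.card with hk
  let e : Fin k ≃o {x // x ∈ A} := A.orderIsoOfFin rfl
  have hmem : ∀ a : α, f (ι a) ∈ A := fun a =>
    Finset.mem_image_of_mem _ (Finset.mem_univ a)
  let f1 : α → ℕ := fun a => (e.symm ⟨f (ι a), hmem a⟩).val
  have hlt : ∀ a, f1 a < k := fun a => (e.symm ⟨f (ι a), hmem a⟩).isLt
  -- order transfer
  have key : ∀ (i : Fin k) (a : α), ((e i : ℕ) < f (ι a)) ↔ (i : ℕ) < f1 a := by
    intro i a
    have h1 : ((e i : ℕ) < f (ι a)) ↔ e i < (⟨f (ι a), hmem a⟩ : {x // x ∈ A}) :=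
      Iff.rfl
    rw [h1, show (⟨f (ι a), hmem a⟩ : {x // x ∈ A}) = e (e.symm ⟨f (ι a), hmem a⟩) by
      simp, e.lt_iff_lt]
    exact Iff.rfl
  -- value transfer
  have keyeq : ∀ (i : Fin k) (a : α), f (ι a) = (e i : ℕ) → f1 a = (i : ℕ) := by
    intro i a hfa
    have : (⟨f (ι a), hmem a⟩ : {x // x ∈ A}) = e i := Subtype.ext hfa
    simp only [f1, this, OrderIso.symm_apply_apply]
  have hgr : IsGrundyColoring G1 f1 := by
    constructor
    · intro a a' haa' heq
      have hne : f (ι a) ≠ f (ι a') := hf.1 _ _ ((hadj a a').2 haa')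
      apply hne
      have h2 : e.symm ⟨f (ι a), hmem a⟩ = e.symm ⟨f (ι a'), hmem a'⟩ := Fin.ext heq
      exact Subtype.ext_iff.mp (e.symm.injective h2)
    · intro a i hi
      have hik : i < k := hi.trans (hlt a)
      have hci : (e ⟨i, hik⟩ : ℕ) < f (ι a) := (key ⟨i, hik⟩ a).mpr hi
      obtain ⟨u, huadj, hu⟩ := hf.2 (ι a) _ hci
      obtain ⟨a', rfl⟩ := hclass u (hu ▸ (e ⟨i, hik⟩).2)
      exact ⟨a', (hadj a a').1 huadj, keyeq ⟨i, hik⟩ a' hu⟩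
  have himg : Finset.univ.image f1 = Finset.range k := by
    apply Finset.Subset.antisymm
    · intro c hc
      simp only [Finset.mem_image, Finset.mem_univ, true_and] at hc
      obtain ⟨a, rfl⟩ := hc
      exact Finset.mem_range.2 (hlt a)
    · intro i hi
      rw [Finset.mem_range] at hi
      obtain ⟨a, -, ha⟩ := Finset.mem_image.mp (e ⟨i, hi⟩).2
      simp only [Finset.mem_image, Finset.mem_univ, true_and]
      exact ⟨a, keyeq ⟨i, hi⟩ a ha⟩
  have := le_grundy G1 f1 hgr
  rwa [himg, Finset.card_range] at this

/-- the Grundy number of a join is the sum of the Grundy numbers. -/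
theorem grundy_join {α β : Type*} [Fintype α] [Fintype β]
    (G1 : SimpleGraph α) (G2 : SimpleGraph β) :
    grundy (G1.join G2) = grundy G1 + grundy G2 := by
  classical
  have jll : ∀ (a : α) (a' : α), (G1.join G2).Adj (Sum.inl a) (Sum.inl a') ↔ G1.Adj a a' :=
    fun _ _ => Iff.rfl
  have jrr : ∀ (b : β) (b' : β), (G1.join G2).Adj (Sum.inr b) (Sum.inr b') ↔ G2.Adj b b' :=
    fun _ _ => Iff.rfl
  have jlr : ∀ (a : α) (b : β), (G1.join G2).Adj (Sum.inl a) (Sum.inr b) :=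
    fun _ _ => trivial
  have jrl : ∀ (b : β) (a : α), (G1.join G2).Adj (Sum.inr b) (Sum.inl a) :=
    fun _ _ => trivial
  apply le_antisymm
  · -- ≤ : every Grundy coloring of the join splits
    apply csSup_le (grundySet_nonempty _)
    rintro k ⟨f, hf, rfl⟩
    set A : Finset ℕ := Finset.univ.image (fun a => f (Sum.inl a)) with hA
    set B : Finset ℕ := Finset.univ.image (fun b => f (Sum.inr b)) with hB
    have hdisj : Disjoint A B := by
      rw [Finset.disjoint_left]
      rintro c hcA hcB
      obtain ⟨a, -, ha⟩ := Finset.mem_image.mp hcA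
      obtain ⟨b, -, hb⟩ := Finset.mem_image.mp hcB
      exact hf.1 _ _ (jlr a b) (ha.trans hb.symm)
    have himg : Finset.univ.image f = A ∪ B := by
      ext c
      simp only [Finset.mem_union, hA, hB, Finset.mem_image, Finset.mem_univ, true_and]
      constructor
      · rintro ⟨v, hv⟩
        cases v with
        | inl a => exact Or.inl ⟨a, hv⟩
        | inr b => exact Or.inr ⟨b, hv⟩
      · rintro (⟨a, ha⟩ | ⟨b, hb⟩)
        · exact ⟨Sum.inl a, ha⟩
        · exact ⟨Sum.inr b, hb⟩
    have hAle : A.card ≤ grundy G1 := by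
      apply restrict_card_le G1 (G1.join G2) f hf Sum.inl jll
      rintro v hv
      cases v with
      | inl a => exact ⟨a, rfl⟩
      | inr b =>
        exfalso
        obtain ⟨a, -, ha⟩ := Finset.mem_image.mp hv
        exact hf.1 _ _ (jlr a b) ha
    have hBle : B.card ≤ grundy G2 := by
      apply restrict_card_le G2 (G1.join G2) f hf Sum.inr jrr
      rintro v hv
      cases v with
      | inr b => exact ⟨b, rfl⟩
      | inl a =>
        exfalso
        obtain ⟨b, -, hb⟩ := Finset.mem_image.mp hv
        exact hf.1 _ _ (jrl b a) hb
    rw [himg, Finset.card_union_of_disjoint hdisj]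
    exact Nat.add_le_add hAle hBle
  · -- ≥ : combine two Grundy colorings
    obtain ⟨f1, hf1, hc1⟩ := grundy_mem G1
    obtain ⟨f2, hf2, hc2⟩ := grundy_mem G2
    set k1 := (Finset.univ.image f1).card with hk1
    set k2 := (Finset.univ.image f2).card with hk2
    have hr1 : Finset.univ.image f1 = Finset.range k1 := grundy_image_eq G1 f1 hf1
    have hlt1 : ∀ a, f1 a < k1 := fun a => by
      have : f1 a ∈ Finset.univ.image f1 := Finset.mem_image_of_mem _ (Finset.mem_univ a)
      rw [hr1, Finset.mem_range] at this
      exact this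
    set g : α ⊕ β → ℕ := Sum.elim f1 (fun b => k1 + f2 b) with hg
    have hgr : IsGrundyColoring (G1.join G2) g := by
      constructor
      · rintro (a | b) (a' | b') huv
        · exact hf1.1 _ _ huv
        · exact Nat.ne_of_lt (lt_of_lt_of_le (hlt1 a) (Nat.le_add_right _ _))
        · exact Nat.ne_of_gt (lt_of_lt_of_le (hlt1 a') (Nat.le_add_right _ _))
        · exact fun he => hf2.1 _ _ huv (Nat.add_left_cancel he)
      · rintro (a | b) i hi
        · obtain ⟨u, hu, huc⟩ := hf1.2 a i hi
          exact ⟨Sum.inl u, hu, huc⟩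
        · rcases lt_or_ge i k1 with h | h
          · have : i ∈ Finset.univ.image f1 := by rw [hr1]; exact Finset.mem_range.2 h
            obtain ⟨a, -, ha⟩ := Finset.mem_image.mp this
            exact ⟨Sum.inl a, jrl b a, ha⟩
          · obtain ⟨u, hu, huc⟩ := hf2.2 b (i - k1) (by simp only [hg, Sum.elim_inr] at hi; omega)
            exact ⟨Sum.inr u, hu, by simp only [hg, Sum.elim_inr]; omega⟩
    have himg : Finset.univ.image g =
        Finset.univ.image f1 ∪ (Finset.univ.image f2).image (fun c => k1 + c) := by
      ext c
      simp only [Finset.mem_union, Finset.mem_image, Finset.mem_univ, true_and]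
      constructor
      · rintro ⟨v, hv⟩
        cases v with
        | inl a => exact Or.inl ⟨a, hv⟩
        | inr b => exact Or.inr ⟨f2 b, ⟨b, rfl⟩, hv⟩
      · rintro (⟨a, ha⟩ | ⟨x, ⟨b, rfl⟩, hb⟩)
        · exact ⟨Sum.inl a, ha⟩
        · exact ⟨Sum.inr b, hb⟩
    have hdisj2 : Disjoint (Finset.univ.image f1)
        ((Finset.univ.image f2).image (fun c => k1 + c)) := by
      rw [Finset.disjoint_left]
      rintro c hc1' hc2'
      rw [hr1, Finset.mem_range] at hc1'
      obtain ⟨x, -, hx⟩ := Finset.mem_image.mp hc2'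
      omega
    have hcard : (Finset.univ.image g).card = grundy G1 + grundy G2 := by
      rw [himg, Finset.card_union_of_disjoint hdisj2,
        Finset.card_image_of_injective _ (add_right_injective k1),
        ← hk1, ← hk2, hc1, hc2]
    calc grundy G1 + grundy G2 = (Finset.univ.image g).card := hcard.symm
      _ ≤ grundy (G1.join G2) := le_grundy _ g hgr
end

section
/- For every finite cograph G, the Grundy number of G equals the clique number of G, which in turn equals the chromatic number of G. -/
open SimpleGraph

/-! ### Auxiliary lemmas -/

open Classical in
noncomputable def greedyAux {V : Type*} (G : SimpleGraph V) (e : ℕ → V) : ℕ → ℕ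
  | k => sInf {c | ∀ j, ∀ _ : j < k, G.Adj (e j) (e k) → greedyAux G e j ≠ c}

lemma greedySet_nonempty {V : Type*} (G : SimpleGraph V) (e : ℕ → V) (k : ℕ) :
    {c | ∀ j, ∀ _ : j < k, G.Adj (e j) (e k) → greedyAux G e j ≠ c}.Nonempty := by
  refine ⟨(Finset.range k).sup (fun j => greedyAux G e j) + 1, fun j hj _ => ?_⟩
  have : greedyAux G e j ≤ (Finset.range k).sup (fun j => greedyAux G e j) :=
    Finset.le_sup (Finset.mem_range.2 hj)
  omega

lemma greedyAux_mem {V : Type*} (G : SimpleGraph V) (e : ℕ → V) (k : ℕ) :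
    ∀ j, j < k → G.Adj (e j) (e k) → greedyAux G e j ≠ greedyAux G e k := by
  have h := Nat.sInf_mem (greedySet_nonempty G e k)
  rw [greedyAux]
  exact h

lemma greedyAux_lt {V : Type*} (G : SimpleGraph V) (e : ℕ → V) (k : ℕ) {i : ℕ}
    (hi : i < greedyAux G e k) : ∃ j, j < k ∧ G.Adj (e j) (e k) ∧ greedyAux G e j = i := by
  rw [greedyAux] at hi
  have := Nat.notMem_of_lt_sInf hi
  simp only [Set.mem_setOf_eq, not_forall] at this
  obtain ⟨j, hj, hadj, hne⟩ := this
  exact ⟨j, hj, hadj, not_not.mp hne⟩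

/-- If `c-x`, `x-y`, `y-c'` are edges and `c-y`, `c-c'`, `x-c'` are non-edges with all four
vertices distinct, then `G` has an induced `P₄`. -/
lemma hasInduced_p4 {V : Type*} {G : SimpleGraph V} {c x y c' : V}
    (hcx : G.Adj c x) (hxy : G.Adj x y) (hyc' : G.Adj y c')
    (hcy : ¬ G.Adj c y) (hcc' : ¬ G.Adj c c') (hxc' : ¬ G.Adj x c')
    (h1 : c ≠ x) (h2 : c ≠ y) (h3 : c ≠ c') (h4 : x ≠ y) (h5 : x ≠ c') (h6 : y ≠ c') :
    HasInduced G (pathGraph 4) := by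
  refine ⟨⟨![c, x, y, c'], ?_⟩, ?_⟩
  · intro a b hab
    fin_cases a <;> fin_cases b <;> simp_all <;> omega
  · have hyc : ¬ G.Adj y c := fun h => hcy h.symm
    have hc'c : ¬ G.Adj c' c := fun h => hcc' h.symm
    have hc'x : ¬ G.Adj c' x := fun h => hxc' h.symm
    intro a b
    change G.Adj (![c, x, y, c'] a) (![c, x, y, c'] b) ↔ _
    fin_cases a <;> fin_cases b <;>
      simp [pathGraph_adj, hcx, hxy, hyc', hcy, hcc', hxc', hcx.symm, hxy.symm, hyc'.symm,
        hyc, hc'c, hc'x, G.irrefl] <;> omega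

open Classical in
/-- In a `P₄`-free graph, a dominating independent set `C` contains a member adjacent to
all of a disjoint nonempty clique `K`. -/
lemma meet_lemma {V : Type*} [Fintype V] {G : SimpleGraph V} (hG : IsCograph G)
    {C K : Finset V}
    (hCind : ∀ u ∈ C, ∀ v ∈ C, ¬ G.Adj u v)
    (hdom : ∀ k ∈ K, k ∉ C → ∃ c ∈ C, G.Adj k c)
    (hK : G.IsClique (K : Set V)) (hdisj : ∀ k ∈ K, k ∉ C) (hKne : K.Nonempty) :
    ∃ c ∈ C, ∀ k ∈ K, G.Adj c k := by
  have hCne : C.Nonempty := by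
    obtain ⟨k, hk⟩ := hKne
    obtain ⟨c, hc, _⟩ := hdom k hk (hdisj k hk)
    exact ⟨c, hc⟩
  obtain ⟨c, hcC, hmax⟩ := Finset.exists_max_image C
    (fun c => (K.filter (fun k => G.Adj c k)).card) hCne
  by_contra hno
  push_neg at hno
  obtain ⟨y, hyK, hcy⟩ := hno c hcC
  obtain ⟨c', hc'C, hyc'⟩ := hdom y hyK (hdisj y hyK)
  have hxex : ∃ x ∈ K.filter (fun k => G.Adj c k), x ∉ K.filter (fun k => G.Adj c' k) := by
    by_contra hsub
    push_neg at hsub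
    have hsubset : K.filter (fun k => G.Adj c k) ⊆ K.filter (fun k => G.Adj c' k) := hsub
    have hy' : y ∈ K.filter (fun k => G.Adj c' k) := Finset.mem_filter.2 ⟨hyK, hyc'.symm⟩
    have hy'' : y ∉ K.filter (fun k => G.Adj c k) := fun h => hcy (Finset.mem_filter.1 h).2
    have : (K.filter (fun k => G.Adj c k)).card < (K.filter (fun k => G.Adj c' k)).card :=
      Finset.card_lt_card (Finset.ssubset_iff_of_subset hsubset |>.2 ⟨y, hy', hy''⟩)
    exact absurd (hmax c' hc'C) (by omega)
  obtain ⟨x, hx1, hx2⟩ := hxex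
  rw [Finset.mem_filter] at hx1
  obtain ⟨hxK, hcx⟩ := hx1
  have hxc' : ¬ G.Adj x c' := fun h => hx2 (Finset.mem_filter.2 ⟨hxK, h.symm⟩)
  have hcne : c ≠ c' := fun h => hcy (h ▸ hyc'.symm)
  have hxy : x ≠ y := fun h => hcy (h ▸ hcx)
  have hxyadj : G.Adj x y := hK hxK hyK hxy
  exact hG (hasInduced_p4 hcx hxyadj hyc' hcy (hCind c hcC c' hc'C) hxc'
    (G.ne_of_adj hcx) (fun h : c = y => (hdisj y hyK) (h ▸ hcC))
    hcne hxy (fun h => (hdisj x hxK) (h ▸ hc'C)) (fun h => (hdisj y hyK) (h ▸ hc'C)))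

/-- A Grundy coloring restricted to a vertex subset. -/
def GrundyOn {V : Type*} (G : SimpleGraph V) (W : Finset V) (f : V → ℕ) : Prop :=
  (∀ u ∈ W, ∀ v ∈ W, G.Adj u v → f u ≠ f v) ∧
  ∀ v ∈ W, ∀ i < f v, ∃ u ∈ W, G.Adj v u ∧ f u = i

open Classical in
/-- In a cograph, a Grundy coloring with a vertex of color `n` yields a clique of size `n+1`. -/
lemma grundyOn_clique {V : Type*} [Fintype V] {G : SimpleGraph V} (hG : IsCograph G) :
    ∀ (n : ℕ) (W : Finset V) (f : V → ℕ) (v : V), GrundyOn G W f → v ∈ W → f v = n →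
    ∃ K : Finset V, K ⊆ W ∧ G.IsClique (K : Set V) ∧ K.card = n + 1 := by
  intro n
  induction n with
  | zero =>
    intro W f v _ hv _
    exact ⟨{v}, Finset.singleton_subset_iff.2 hv, by simp, by simp⟩
  | succ n ih =>
    intro W f v hf hv hfv
    set C0 : Finset V := W.filter (fun u => f u = 0) with hC0
    set W' : Finset V := W \ C0 with hW'
    have hmemW' : ∀ u, u ∈ W' ↔ u ∈ W ∧ f u ≠ 0 := by
      intro u
      simp [hW', hC0, Finset.mem_sdiff, Finset.mem_filter]
      tauto
    set f' : V → ℕ := fun u => f u - 1 with hf'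
    have hG' : GrundyOn G W' f' := by
      constructor
      · intro u hu w hw hadj
        have h1 := (hmemW' u).1 hu
        have h2 := (hmemW' w).1 hw
        have := hf.1 u h1.1 w h2.1 hadj
        simp only [hf']
        omega
      · intro u hu i hi
        have h1 := (hmemW' u).1 hu
        have hi' : i + 1 < f u := by simp only [hf'] at hi; omega
        obtain ⟨w, hw, hadj, hfw⟩ := hf.2 u h1.1 (i+1) hi'
        refine ⟨w, (hmemW' w).2 ⟨hw, by omega⟩, hadj, by simp [hf']; omega⟩
    have hvW' : v ∈ W' := (hmemW' v).2 ⟨hv, by omega⟩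
    have hfv' : f' v = n := by simp [hf']; omega
    obtain ⟨K, hKW', hKcl, hKcard⟩ := ih W' f' v hG' hvW' hfv'
    have hKW : K ⊆ W := hKW'.trans (Finset.sdiff_subset)
    have hdisj : ∀ k ∈ K, k ∉ C0 := by
      intro k hk hkC0
      have := (hmemW' k).1 (hKW' hk)
      rw [Finset.mem_filter] at hkC0
      exact this.2 hkC0.2
    have hCind : ∀ u ∈ C0, ∀ w ∈ C0, ¬ G.Adj u w := by
      intro u hu w hw hadj
      simp only [hC0, Finset.mem_filter] at hu hw
      exact hf.1 u hu.1 w hw.1 hadj (hu.2.trans hw.2.symm)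
    have hdom : ∀ k ∈ K, k ∉ C0 → ∃ c ∈ C0, G.Adj k c := by
      intro k hk _
      have h1 := (hmemW' k).1 (hKW' hk)
      obtain ⟨u, hu, hadj, hfu⟩ := hf.2 k h1.1 0 (by omega)
      exact ⟨u, by simp [hC0, Finset.mem_filter]; exact ⟨hu, hfu⟩, hadj⟩
    have hKne : K.Nonempty := Finset.card_pos.1 (by omega)
    obtain ⟨c, hcC0, hcall⟩ := meet_lemma hG hCind hdom hKcl hdisj hKne
    have hcK : c ∉ K := fun h => hdisj c h hcC0
    refine ⟨insert c K, ?_, ?_, ?_⟩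
    · intro u hu
      rcases Finset.mem_insert.1 hu with h | h
      · exact h ▸ (Finset.mem_filter.1 hcC0).1
      · exact hKW h
    · rw [Finset.coe_insert]
      exact hKcl.insert (fun k hk _ => hcall k hk)
    · rw [Finset.card_insert_of_notMem hcK, hKcard]

open Classical in
/-- A proper coloring gives colorability with (image card) colors. -/
lemma colorable_of_proper {V : Type*} [Fintype V] {G : SimpleGraph V} {f : V → ℕ}
    (hf : ∀ u v : V, G.Adj u v → f u ≠ f v) :
    G.Colorable (Finset.univ.image f).card := by
  set s := Finset.univ.image f with hs
  have hmem : ∀ v : V, f v ∈ s := fun v => Finset.mem_image_of_mem f (Finset.mem_univ v)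
  refine ⟨Coloring.mk (fun v => s.equivFin ⟨f v, hmem v⟩) ?_⟩
  intro u v hadj h
  exact hf u v hadj (Subtype.ext_iff.1 (s.equivFin.injective h))


/-- for a finite cograph, Grundy number = clique number = chromatic number. -/
theorem cograph_grundy_eq_cliqueNum_eq_chromaticNumber {V : Type*} [Fintype V]
    (G : SimpleGraph V) (hG : IsCograph G) :
    grundy G = G.cliqueNum ∧ (G.cliqueNum : ℕ∞) = G.chromaticNumber := by
  classical
  set S := {k | ∃ f : V → ℕ, IsGrundyColoring G f ∧ k = (Finset.univ.image f).card} with hS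
  obtain ⟨f0, hf0⟩ := exists_isGrundyColoring G
  have hSne : S.Nonempty := ⟨_, f0, hf0, rfl⟩
  have hub : ∀ k ∈ S, k ≤ G.cliqueNum := by
    rintro k ⟨f, hf, rfl⟩
    cases isEmpty_or_nonempty V with
    | inl h => simp [Finset.univ_eq_empty]
    | inr h =>
      obtain ⟨v, -, hvmax⟩ := Finset.exists_max_image Finset.univ f Finset.univ_nonempty
      have himg : Finset.univ.image f = Finset.range (f v + 1) := by
        apply Finset.ext
        intro i
        simp only [Finset.mem_image, Finset.mem_range, Finset.mem_univ, true_and]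
        constructor
        · rintro ⟨u, rfl⟩
          exact Nat.lt_succ_of_le (hvmax u (Finset.mem_univ u))
        · intro hi
          rcases Nat.lt_succ_iff_lt_or_eq.1 hi with hlt | heq
          · obtain ⟨u, _, hu⟩ := hf.2 v i hlt
            exact ⟨u, hu⟩
          · exact ⟨v, heq.symm⟩
      have hg : GrundyOn G Finset.univ f :=
        ⟨fun u _ w _ h => hf.1 u w h, fun u _ i hi => by
          obtain ⟨w, hw, hfw⟩ := hf.2 u i hi; exact ⟨w, Finset.mem_univ w, hw, hfw⟩⟩
      obtain ⟨K, -, hKcl, hKcard⟩ :=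
        grundyOn_clique hG (f v) Finset.univ f v hg (Finset.mem_univ v) rfl
      rw [himg, Finset.card_range]
      calc f v + 1 = K.card := hKcard.symm
        _ ≤ G.cliqueNum := IsClique.card_le_cliqueNum (tc := hKcl)
  have hgrundy_le : grundy G ≤ G.cliqueNum := csSup_le hSne hub
  have hbdd : BddAbove S := ⟨G.cliqueNum, hub⟩
  have hcol : G.Colorable (Finset.univ.image f0).card := colorable_of_proper hf0.1
  obtain ⟨s, hs⟩ := G.exists_isNClique_cliqueNum
  have hclique_le : G.cliqueNum ≤ (Finset.univ.image f0).card := by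
    have := IsClique.card_le_of_colorable hs.1 hcol
    rwa [hs.2] at this
  have hle2 : (Finset.univ.image f0).card ≤ grundy G := le_csSup hbdd ⟨f0, hf0, rfl⟩
  have h1 : grundy G = G.cliqueNum := le_antisymm hgrundy_le (hclique_le.trans hle2)
  have hk0 : (Finset.univ.image f0).card = G.cliqueNum :=
    le_antisymm (h1 ▸ hle2) hclique_le
  refine ⟨h1, le_antisymm ?_ ?_⟩
  · have := IsClique.card_le_chromaticNumber hs.1
    rwa [hs.2] at this
  · exact (hk0 ▸ hcol).chromaticNumber_le
end

section
/- In a finite cograph, every maximal independent set intersects every maximal clique. -/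
open SimpleGraph

/-- in a finite cograph, every maximal independent set meets every
maximal clique. -/
theorem cograph_maxIndep_inter_maxClique {V : Type*} [Fintype V] [Nonempty V]
    (G : SimpleGraph V) (hG : IsCograph G) (s t : Set V)
    (hs : IsMaxIndepOn G Set.univ s) (ht : IsMaxCliqueOn G Set.univ t) :
    (s ∩ t).Nonempty := by
  classical
  by_contra hne
  rw [Set.not_nonempty_iff_eq_empty] at hne
  have hdisj : ∀ x, x ∈ s → x ∈ t → False := by
    intro x hx hxt
    have : x ∈ s ∩ t := ⟨hx, hxt⟩
    simp [hne] at this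
  obtain ⟨v0⟩ := ‹Nonempty V›
  have htne : t.Nonempty := by
    by_contra h
    rw [Set.not_nonempty_iff_eq_empty] at h
    have := ht.2.2 {v0} (by simp [h]) (by simp) (by simp)
    rw [h] at this
    simpa using this
  have fact1 : ∀ v ∈ t, ∃ u ∈ s, G.Adj v u := by
    intro v hv
    by_contra h
    push_neg at h
    have hvs : v ∉ s := fun hvs => hdisj v hvs hv
    have hind : IsIndepOn G (insert v s) := by
      intro x hx y hy hxy
      rcases hx with rfl | hx
      · rcases hy with rfl | hy
        · exact G.irrefl hxy
        · exact h y hy hxy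
      · rcases hy with rfl | hy
        · exact h x hx (G.adj_symm hxy)
        · exact hs.2.1 x hx y hy hxy
    have heq := hs.2.2 (insert v s) (Set.subset_insert _ _) (by simp) hind
    exact hvs (heq ▸ Set.mem_insert v s)
  have fact2 : ∀ u ∈ s, ∃ v ∈ t, ¬ G.Adj u v := by
    intro u hu
    by_contra h
    push_neg at h
    have hut : u ∉ t := fun h' => hdisj u hu h'
    have hclq : G.IsClique (insert u t) := by
      intro x hx y hy hxy
      rcases hx with rfl | hx
      · rcases hy with rfl | hy
        · exact absurd rfl hxy
        · exact h y hy
      · rcases hy with rfl | hy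
        · exact (h x hx).symm
        · exact ht.2.1 hx hy hxy
    have heq := ht.2.2 (insert u t) (Set.subset_insert _ _) (by simp) hclq
    exact hut (heq ▸ Set.mem_insert u t)
  set nb : V → Finset V := fun u => Finset.univ.filter (fun v => v ∈ t ∧ G.Adj u v) with hnb
  obtain ⟨w0, hw0t⟩ := htne
  obtain ⟨u1, hu1s, _⟩ := fact1 w0 hw0t
  have hsne : s.toFinset.Nonempty := ⟨u1, Set.mem_toFinset.mpr hu1s⟩
  obtain ⟨u, huF, hmax⟩ := s.toFinset.exists_max_image (fun u => (nb u).card) hsne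
  have hus : u ∈ s := Set.mem_toFinset.mp huF
  obtain ⟨b, hbt, hub⟩ := fact2 u hus
  obtain ⟨u', hu's, hu'b⟩ := fact1 b hbt
  have hkey : ∃ a ∈ t, G.Adj u a ∧ ¬ G.Adj u' a := by
    by_contra h
    push_neg at h
    have hsub : nb u ⊂ nb u' := by
      constructor
      · intro v hv
        simp only [hnb, Finset.mem_filter, Finset.mem_univ, true_and] at hv ⊢
        exact ⟨hv.1, h v hv.1 hv.2⟩
      · intro hsub'
        have hbmem : b ∈ nb u' := by
          simp only [hnb, Finset.mem_filter, Finset.mem_univ, true_and]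
          exact ⟨hbt, G.adj_symm hu'b⟩
        have hb' := hsub' hbmem
        simp only [hnb, Finset.mem_filter, Finset.mem_univ, true_and] at hb'
        exact hub hb'.2
    have h1 := Finset.card_lt_card hsub
    have h2 := hmax u' (Set.mem_toFinset.mpr hu's)
    omega
  obtain ⟨a, hat, hua, hu'a⟩ := hkey
  have hab : a ≠ b := fun h => hub (h ▸ hua)
  have hAab : G.Adj a b := ht.2.1 hat hbt hab
  have hAbu' : G.Adj b u' := hu'b
  have hNuu' : ¬ G.Adj u u' := hs.2.1 u hus u' hu's
  have hNau' : ¬ G.Adj a u' := fun h => hu'a (G.adj_symm h)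
  have hns : u ≠ u' := fun h => hu'a (h ▸ hua)
  have hua' : u ≠ a := fun h => hdisj u hus (h ▸ hat)
  have hub' : u ≠ b := fun h => hdisj u hus (h ▸ hbt)
  have hu'a' : u' ≠ a := fun h => hdisj u' hu's (h ▸ hat)
  have hu'b' : u' ≠ b := fun h => hdisj u' hu's (h ▸ hbt)
  apply hG
  refine ⟨⟨![u, a, b, u'], ?_⟩, ?_⟩
  · intro i j hij
    fin_cases i <;> fin_cases j <;> simp_all
  · intro i j
    change G.Adj (![u, a, b, u'] i) (![u, a, b, u'] j) ↔ _
    have h1 := hua.symm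
    have h2 := hAab.symm
    have h3 := hAbu'.symm
    have h4 : ¬ G.Adj b u := fun h => hub h.symm
    have h5 : ¬ G.Adj u' u := fun h => hNuu' h.symm
    have h6 : ¬ G.Adj u' a := hu'a
    have h7 : ¬ G.Adj a u' := hNau'
    fin_cases i <;> fin_cases j <;>
      simp [pathGraph_adj, hua, hAab, hAbu', hub, hNuu', hNau', hu'a,
        h1, h2, h3, h4, h5, G.irrefl] <;> decide
end

section
/- A finite simple graph in which every maximal independent set intersects every maximal clique, and this property holds for all induced subgraphs, is a cograph. -/
open SimpleGraph

/-- if in every (nonempty) induced subgraph every maximal independent set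
meets every maximal clique, then the graph is a cograph. -/
theorem cograph_of_maxIndep_inter_maxClique {V : Type*} [Fintype V] (G : SimpleGraph V)
    (h : ∀ W : Set V, W.Nonempty → ∀ s t : Set V,
      IsMaxIndepOn G W s → IsMaxCliqueOn G W t → (s ∩ t).Nonempty) :
    IsCograph G := by
  rintro ⟨f, hf⟩
  have p01 : (pathGraph 4).Adj 0 1 := by simp only [pathGraph_adj]; decide
  have p12 : (pathGraph 4).Adj 1 2 := by simp only [pathGraph_adj]; decide
  have p23 : (pathGraph 4).Adj 2 3 := by simp only [pathGraph_adj]; decide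
  have np02 : ¬ (pathGraph 4).Adj 0 2 := by simp only [pathGraph_adj]; decide
  have np03 : ¬ (pathGraph 4).Adj 0 3 := by simp only [pathGraph_adj]; decide
  have np13 : ¬ (pathGraph 4).Adj 1 3 := by simp only [pathGraph_adj]; decide
  have hinj := f.injective
  have hne01 : f 0 ≠ f 1 := fun e => by simpa using hinj e
  have hne02 : f 0 ≠ f 2 := fun e => by simpa using hinj e
  have hne03 : f 0 ≠ f 3 := fun e => by simpa using hinj e
  have hne12 : f 1 ≠ f 2 := fun e => by simpa using hinj e
  have hne13 : f 1 ≠ f 3 := fun e => by simpa using hinj e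
  have hne23 : f 2 ≠ f 3 := fun e => by simpa using hinj e
  set W : Set V := {f 0, f 1, f 2, f 3} with hW
  have h0W : f 0 ∈ W := by left; rfl
  have h1W : f 1 ∈ W := by right; left; rfl
  have h2W : f 2 ∈ W := by right; right; left; rfl
  have h3W : f 3 ∈ W := by right; right; right; rfl
  set s : Set V := {f 0, f 3} with hs
  set t : Set V := {f 1, f 2} with ht
  have hsInd : IsIndepOn G s := by
    rintro u (rfl | rfl) v (rfl | rfl)
    · exact fun hadj => G.loopless.irrefl _ hadj
    · exact fun hadj => np03 ((hf 0 3).mp hadj)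
    · exact fun hadj => np03 ((hf 0 3).mp (G.adj_symm hadj))
    · exact fun hadj => G.loopless.irrefl _ hadj
  have hsMax : IsMaxIndepOn G W s := by
    refine ⟨?_, hsInd, ?_⟩
    · rintro x (rfl | rfl)
      · exact h0W
      · exact h3W
    · intro D hsD hDW hDind
      apply Set.Subset.antisymm _ hsD
      intro x hxD
      have hxW := hDW hxD
      rcases hxW with rfl | rfl | rfl | rfl
      · left; rfl
      · exact absurd ((hf 0 1).mpr p01) (hDind (f 0) (hsD (by left; rfl)) (f 1) hxD)
      · exact absurd ((hf 2 3).mpr p23) (hDind (f 2) hxD (f 3) (hsD (by right; rfl)))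
      · right; rfl
  have htClique : G.IsClique t := by
    rintro u (rfl | rfl) v (rfl | rfl) hne
    · exact absurd rfl hne
    · exact (hf 1 2).mpr p12
    · exact G.adj_symm ((hf 1 2).mpr p12)
    · exact absurd rfl hne
  have htMax : IsMaxCliqueOn G W t := by
    refine ⟨?_, htClique, ?_⟩
    · rintro x (rfl | rfl)
      · exact h1W
      · exact h2W
    · intro D htD hDW hDcl
      apply Set.Subset.antisymm _ htD
      intro x hxD
      have hxW := hDW hxD
      rcases hxW with rfl | rfl | rfl | rfl
      · exact absurd ((hf 0 2).mp (hDcl hxD (htD (by right; rfl)) hne02)) np02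
      · left; rfl
      · right; rfl
      · exact absurd ((hf 1 3).mp (hDcl (htD (by left; rfl)) hxD hne13)) np13
  obtain ⟨x, hxs, hxt⟩ := h W ⟨f 0, h0W⟩ s t hsMax htMax
  rcases hxs with rfl | rfl <;> rcases hxt with h' | h'
  · exact hne01 h'
  · exact hne02 h'
  · exact hne13 h'.symm
  · exact hne23 h'.symm
end

section
/- Two graphs on the same vertex set are Seidel switching equivalent if and only if they have the same set of odd triples, where a triple of distinct vertices is odd if it spans an odd number of edges. -/
open SimpleGraph

open scoped Classical in
lemma parity_aux_seidel (a b c a' b' c' : Prop) :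
    (Odd ((if a then 1 else 0) + (if b then 1 else 0) + (if c then 1 else 0)) ↔
     Odd ((if a' then 1 else 0) + (if b' then 1 else 0) + (if c' then 1 else 0))) ↔
    ((¬(a ↔ a')) ↔ ¬((b ↔ b') ↔ (c ↔ c'))) := by
  by_cases a <;> by_cases b <;> by_cases c <;> by_cases a' <;> by_cases b' <;> by_cases c' <;>
    simp_all <;> decide

set_option maxHeartbeats 1000000 in
/-- two graphs on the same finite vertex set are switching equivalent iff
they have the same odd triples. -/
theorem switchingEquivalent_iff_oddTriples {V : Type*} [Fintype V] (G H : SimpleGraph V) :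
    (∃ S : Set V, H = seidelSwitch G S) ↔
      ∀ x y z : V, x ≠ y → x ≠ z → y ≠ z →
        (OddTriple G x y z ↔ OddTriple H x y z) := by
  classical
  constructor
  · rintro ⟨S, rfl⟩ x y z hxy hxz hyz
    unfold OddTriple edgeCount
    rw [parity_aux_seidel]
    simp only [seidelSwitch, hxy, hxz, hyz, ne_eq, not_false_iff, true_and]
    by_cases hx : x ∈ S <;> by_cases hy : y ∈ S <;> by_cases hz : z ∈ S <;>
      by_cases G.Adj x y <;> by_cases G.Adj x z <;> by_cases G.Adj y z <;> simp_all
  · intro h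
    by_cases hV : Nonempty V
    · obtain ⟨v0⟩ := hV
      have key : ∀ x y : V, x ≠ y →
          ((¬(G.Adj x y ↔ H.Adj x y)) ↔
            ¬((¬(G.Adj v0 x ↔ H.Adj v0 x)) ↔ ¬(G.Adj v0 y ↔ H.Adj v0 y))) := by
        intro x y hxy
        by_cases hx : x = v0
        · subst hx
          have hs : G.Adj x x ↔ H.Adj x x := by simp
          tauto
        · by_cases hy : y = v0
          · subst hy
            have hs : G.Adj y y ↔ H.Adj y y := by simp
            have hc1 : G.Adj y x ↔ G.Adj x y := G.adj_comm x y |>.symm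
            have hc2 : H.Adj y x ↔ H.Adj x y := H.adj_comm x y |>.symm
            tauto
          · have h3 := h v0 x y (Ne.symm hx) (Ne.symm hy) hxy
            unfold OddTriple edgeCount at h3
            rw [parity_aux_seidel] at h3
            tauto
      refine ⟨{x | ¬(G.Adj v0 x ↔ H.Adj v0 x)}, ?_⟩
      ext x y
      by_cases hxy : x = y
      · subst hxy; simp [seidelSwitch]
      · have hk := key x y hxy
        simp only [seidelSwitch, Set.mem_setOf_eq, hxy, ne_eq, not_false_iff, true_and]
        tauto
    · exact ⟨∅, by ext x y; exact absurd ⟨x⟩ hV⟩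
end

section
/- If every induced subgraph of a finite graph G on at least two vertices has two vertices forming a twin or an anti-twin, then G contains no induced C_5, bull, gem, or co-gem. -/
open SimpleGraph

lemma no_induced_of_no_twins {V W : Type*} (G : SimpleGraph V)
    (h : ∀ S : Set V, (∃ a ∈ S, ∃ b ∈ S, a ≠ b) →
      ∃ x ∈ S, ∃ y ∈ S, x ≠ y ∧ (TwinsOn G S x y ∨ AntiTwinsOn G S x y))
    (H : SimpleGraph W) (a0 b0 : W) (hab : a0 ≠ b0)
    (hH : ∀ x y : W, x ≠ y →
      ¬((∀ z, z ≠ x → z ≠ y → (H.Adj x z ↔ H.Adj y z)) ∨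
        (∀ z, z ≠ x → z ≠ y → (H.Adj x z ↔ ¬ H.Adj y z)))) :
    ¬ HasInduced G H := by
  rintro ⟨f, hf⟩
  obtain ⟨x, ⟨a, rfl⟩, y, ⟨b, rfl⟩, hxy, htw⟩ :=
    h (Set.range f) ⟨f a0, ⟨a0, rfl⟩, f b0, ⟨b0, rfl⟩, fun e => hab (f.injective e)⟩
  have hab' : a ≠ b := fun e => hxy (congrArg f e)
  refine hH a b hab' ?_
  rcases htw with ht | ht
  · exact Or.inl fun z hza hzb => by
      have := ht (f z) ⟨z, rfl⟩ (fun e => hza (f.injective e)) (fun e => hzb (f.injective e))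
      rwa [hf, hf] at this
  · exact Or.inr fun z hza hzb => by
      have := ht (f z) ⟨z, rfl⟩ (fun e => hza (f.injective e)) (fun e => hzb (f.injective e))
      rwa [hf, hf] at this


instance : DecidableRel bull.Adj := fun a b =>
  decidable_of_iff _ (SimpleGraph.fromRel_adj _ a b).symm

instance : DecidableRel gem.Adj := fun a b =>
  decidable_of_iff _ (SimpleGraph.fromRel_adj _ a b).symm

instance : DecidableRel (gemᶜ).Adj := fun a b =>
  inferInstanceAs (Decidable (a ≠ b ∧ ¬ gem.Adj a b))

/-- if every induced subgraph on at least two vertices has a twin or an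
anti-twin, then the graph has no induced `C₅`, bull, gem or co-gem. -/
theorem no_C5_bull_gem_cogem_of_twins {V : Type*} [Fintype V] (G : SimpleGraph V)
    (h : ∀ W : Set V, (∃ a ∈ W, ∃ b ∈ W, a ≠ b) →
      ∃ x ∈ W, ∃ y ∈ W, x ≠ y ∧ (TwinsOn G W x y ∨ AntiTwinsOn G W x y)) :
    ¬ HasInduced G (cycleGraph 5) ∧ ¬ HasInduced G bull ∧
      ¬ HasInduced G gem ∧ ¬ HasInduced G gemᶜ := by
  refine ⟨?_, ?_, ?_, ?_⟩
  · exact no_induced_of_no_twins G h _ 0 1 (by decide) (by decide)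
  · exact no_induced_of_no_twins G h _ 0 1 (by decide) (by decide)
  · exact no_induced_of_no_twins G h _ 0 1 (by decide) (by decide)
  · exact no_induced_of_no_twins G h _ 0 1 (by decide) (by decide)
end

section
/- A graph G is a Cameron graph if and only if for every (equivalently, some) vertex x of G, the Seidel switch of G with respect to the open neighborhood N(x) is a cograph in which x is an isolated vertex. -/
open SimpleGraph

-- auxiliary
lemma seidelSwitch_adj' {V : Type*} (G : SimpleGraph V) (S : Set V) (x y : V) :
    (seidelSwitch G S).Adj x y ↔ x ≠ y ∧ (G.Adj x y ↔ ((x ∈ S) ↔ (y ∈ S))) := Iff.rfl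

lemma seidelSwitch_involutive {V : Type*} (G : SimpleGraph V) (S : Set V) :
    seidelSwitch (seidelSwitch G S) S = G := by
  ext y z
  simp only [seidelSwitch_adj']
  constructor
  · rintro ⟨hne, h⟩; tauto
  · intro h
    have hne := h.ne
    exact ⟨hne, by tauto⟩

lemma switch_isolated {V : Type*} (G : SimpleGraph V) (x y : V) :
    ¬ (seidelSwitch G (G.neighborSet x)).Adj x y := by
  rintro ⟨hne, h⟩
  simp only [mem_neighborSet, G.irrefl] at h
  tauto

private lemma xor_aux (h a b p q s : Prop) :
    ((h ↔ (p ↔ q)) ↔ ((a ↔ (s ↔ p)) ↔ (b ↔ (s ↔ q)))) ↔ (h ↔ (a ↔ b)) := by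
  by_cases hs : s <;> by_cases hp : p <;> by_cases hq : q <;> by_cases hh : h <;>
    by_cases ha : a <;> by_cases hb : b <;> simp_all

lemma switch_nbhd {V : Type*} (H : SimpleGraph V) (S : Set V) (x : V) :
    seidelSwitch (seidelSwitch H S) ((seidelSwitch H S).neighborSet x)
      = seidelSwitch H (H.neighborSet x) := by
  ext y z
  by_cases hy : y = x
  · subst hy
    exact iff_of_false (switch_isolated _ _ _) (switch_isolated _ _ _)
  by_cases hz : z = x
  · subst hz
    exact iff_of_false (fun h => switch_isolated _ _ _ h.symm)
      (fun h => switch_isolated _ _ _ h.symm)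
  have hxy : x ≠ y := fun e => hy e.symm
  have hxz : x ≠ z := fun e => hz e.symm
  simp only [seidelSwitch_adj', mem_neighborSet, ne_eq, hxy, hxz, not_false_eq_true, true_and]
  refine and_congr_right fun hne => ?_
  simp only [hne, not_false_eq_true, true_and]
  exact xor_aux (H.Adj y z) (H.Adj x y) (H.Adj x z) (y ∈ S) (z ∈ S) (x ∈ S)

def mat (n0 n1 n2 n3 e01 e02 e03 e12 e13 e23 : Bool) (i j : Fin 5) : Bool :=
  match i.val, j.val with
  | 0,1 => e01 | 1,0 => e01
  | 0,2 => e02 | 2,0 => e02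
  | 0,3 => e03 | 3,0 => e03
  | 1,2 => e12 | 2,1 => e12
  | 1,3 => e13 | 3,1 => e13
  | 2,3 => e23 | 3,2 => e23
  | 0,4 => n0 | 4,0 => n0
  | 1,4 => n1 | 4,1 => n1
  | 2,4 => n2 | 4,2 => n2
  | 3,4 => n3 | 4,3 => n3
  | _,_ => false

set_option maxHeartbeats 4000000 in
set_option maxRecDepth 10000 in
private lemma key : ∀ n0 n1 n2 n3 e01 e02 e03 e12 e13 e23 : Bool,
    (∀ i j : Fin 4, ((i:ℕ)+1 = (j:ℕ) ∨ (j:ℕ)+1 = (i:ℕ)) ↔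
      (mat n0 n1 n2 n3 e01 e02 e03 e12 e13 e23 i.castSucc j.castSucc = true ↔
       mat n0 n1 n2 n3 e01 e02 e03 e12 e13 e23 4 i.castSucc =
       mat n0 n1 n2 n3 e01 e02 e03 e12 e13 e23 4 j.castSucc)) →
    ∃ f : Fin 4 → Fin 5, Function.Injective f ∧ ∀ i j : Fin 4,
      (((i:ℕ)+1 = (j:ℕ) ∨ (j:ℕ)+1 = (i:ℕ)) ↔
        mat n0 n1 n2 n3 e01 e02 e03 e12 e13 e23 (f i) (f j) = true) := by
  decide

lemma cograph_switch_nbhd {V : Type*} (H : SimpleGraph V) (x : V) (hH : IsCograph H) :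
    IsCograph (seidelSwitch H (H.neighborSet x)) := by
  classical
  rintro ⟨f, hf⟩
  -- x is not in the image of f
  have hx : ∀ i : Fin 4, f i ≠ x := by
    intro i hi
    have hnb : ∃ j : Fin 4, (pathGraph 4).Adj i j := by
      fin_cases i
      · exact ⟨1, pathGraph_adj.2 (Or.inl rfl)⟩
      · exact ⟨0, pathGraph_adj.2 (Or.inr rfl)⟩
      · exact ⟨3, pathGraph_adj.2 (Or.inl rfl)⟩
      · exact ⟨2, pathGraph_adj.2 (Or.inr rfl)⟩
    obtain ⟨j, hj⟩ := hnb
    have := (hf i j).2 hj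
    rw [hi] at this
    exact switch_isolated H x (f j) this
  set g : Fin 5 → V := ![f 0, f 1, f 2, f 3, x] with hg
  have hgc : ∀ i : Fin 4, g i.castSucc = f i := by
    intro i; fin_cases i <;> rfl
  have hg4 : g 4 = x := rfl
  have hginj : Function.Injective g := by
    rw [hg]
    intro a b hab
    fin_cases a <;> fin_cases b <;> simp_all
  have hmat : ∀ i j : Fin 5, ((mat (decide (H.Adj x (f 0))) (decide (H.Adj x (f 1))) (decide (H.Adj x (f 2))) (decide (H.Adj x (f 3))) (decide (H.Adj (f 0) (f 1))) (decide (H.Adj (f 0) (f 2))) (decide (H.Adj (f 0) (f 3))) (decide (H.Adj (f 1) (f 2))) (decide (H.Adj (f 1) (f 3))) (decide (H.Adj (f 2) (f 3))) i j) = true) ↔ H.Adj (g i) (g j) := by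
    intro i j
    fin_cases i <;> fin_cases j <;>
      simp only [hg, mat, Matrix.cons_val_zero, Matrix.cons_val_one, Matrix.head_cons,
        Matrix.cons_val_two, Matrix.tail_cons, Matrix.cons_val_three, Matrix.cons_val_four,
        decide_eq_true_eq, H.irrefl, false_iff, iff_self, Bool.false_eq_true] <;>
      first
        | rfl
        | exact H.adj_comm _ _
        | simp [H.irrefl]
  have hb : ∀ i j : Fin 4, ((mat (decide (H.Adj x (f 0))) (decide (H.Adj x (f 1))) (decide (H.Adj x (f 2))) (decide (H.Adj x (f 3))) (decide (H.Adj (f 0) (f 1))) (decide (H.Adj (f 0) (f 2))) (decide (H.Adj (f 0) (f 3))) (decide (H.Adj (f 1) (f 2))) (decide (H.Adj (f 1) (f 3))) (decide (H.Adj (f 2) (f 3))) 4 i.castSucc) = (mat (decide (H.Adj x (f 0))) (decide (H.Adj x (f 1))) (decide (H.Adj x (f 2))) (decide (H.Adj x (f 3))) (decide (H.Adj (f 0) (f 1))) (decide (H.Adj (f 0) (f 2))) (decide (H.Adj (f 0) (f 3))) (decide (H.Adj (f 1) (f 2))) (decide (H.Adj (f 1) (f 3))) (decide (H.Adj (f 2)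 (f 3))) 4 j.castSucc)) ↔
      (H.Adj x (f i) ↔ H.Adj x (f j)) := by
    intro i j
    rw [Bool.eq_iff_iff, hmat, hmat, hg4, hgc, hgc]
  have hpat : ∀ i j : Fin 4, ((i:ℕ)+1 = (j:ℕ) ∨ (j:ℕ)+1 = (i:ℕ)) ↔
      ((mat (decide (H.Adj x (f 0))) (decide (H.Adj x (f 1))) (decide (H.Adj x (f 2))) (decide (H.Adj x (f 3))) (decide (H.Adj (f 0) (f 1))) (decide (H.Adj (f 0) (f 2))) (decide (H.Adj (f 0) (f 3))) (decide (H.Adj (f 1) (f 2))) (decide (H.Adj (f 1) (f 3))) (decide (H.Adj (f 2) (f 3))) i.castSucc j.castSucc) = true ↔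
        (mat (decide (H.Adj x (f 0))) (decide (H.Adj x (f 1))) (decide (H.Adj x (f 2))) (decide (H.Adj x (f 3))) (decide (H.Adj (f 0) (f 1))) (decide (H.Adj (f 0) (f 2))) (decide (H.Adj (f 0) (f 3))) (decide (H.Adj (f 1) (f 2))) (decide (H.Adj (f 1) (f 3))) (decide (H.Adj (f 2) (f 3))) 4 i.castSucc) = (mat (decide (H.Adj x (f 0))) (decide (H.Adj x (f 1))) (decide (H.Adj x (f 2))) (decide (H.Adj x (f 3))) (decide (H.Adj (f 0) (f 1))) (decide (H.Adj (f 0) (f 2))) (decide (H.Adj (f 0) (f 3))) (decide (H.Adj (f 1) (f 2))) (decide (H.Adj (f 1) (f 3))) (decide (H.Adj (f 2) (f 3))) 4 j.castSucc)) := by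
    intro i j
    rw [hb i j, hmat i.castSucc j.castSucc, hgc, hgc]
    by_cases hij : i = j
    · subst hij
      refine iff_of_false (by omega) ?_
      simp [H.irrefl]
    · have hne : f i ≠ f j := fun e => hij (f.injective e)
      have hfa := hf i j
      rw [pathGraph_adj] at hfa
      rw [← hfa]
      simp only [seidelSwitch_adj', mem_neighborSet, ne_eq, hne, not_false_eq_true, true_and]
  obtain ⟨f', hinj', hP⟩ := key _ _ _ _ _ _ _ _ _ _ hpat
  refine hH ⟨⟨g ∘ f', hginj.comp hinj'⟩, fun a b => ?_⟩
  rw [pathGraph_adj]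
  exact ((hP a b).trans (hmat (f' a) (f' b))).symm


/-- a graph is Cameron iff for every (equivalently, some) vertex `x`,
switching with respect to `N(x)` yields a cograph in which `x` is isolated. -/
theorem cameron_iff_switch_neighborhood {V : Type*} [Fintype V] [Nonempty V]
    (G : SimpleGraph V) :
    (IsCameron G ↔ ∀ x : V, IsCograph (seidelSwitch G (G.neighborSet x)) ∧
        ∀ y : V, ¬ (seidelSwitch G (G.neighborSet x)).Adj x y) ∧
    (IsCameron G ↔ ∃ x : V, IsCograph (seidelSwitch G (G.neighborSet x)) ∧
        ∀ y : V, ¬ (seidelSwitch G (G.neighborSet x)).Adj x y) := by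
  have fwd : IsCameron G → ∀ x : V, IsCograph (seidelSwitch G (G.neighborSet x)) := by
    rintro ⟨S, H, hH, rfl⟩ x
    rw [switch_nbhd]
    exact cograph_switch_nbhd H x hH
  have bwd : ∀ x : V, IsCograph (seidelSwitch G (G.neighborSet x)) → IsCameron G := by
    intro x hc
    exact ⟨G.neighborSet x, seidelSwitch G (G.neighborSet x), hc,
      (seidelSwitch_involutive G _).symm⟩
  constructor
  · constructor
    · intro h x
      exact ⟨fwd h x, switch_isolated G x⟩
    · intro h
      obtain ⟨x⟩ := ‹Nonempty V›
      exact bwd x (h x).1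
  · constructor
    · intro h
      obtain ⟨x⟩ := ‹Nonempty V›
      exact ⟨x, fwd h x, switch_isolated G x⟩
    · rintro ⟨x, hc, _⟩
      exact bwd x hc
end
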